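/- Let (φ_{s,t}) be an evolution family in 𝔻. Then there exists a Lebesgue-null set N ⊂ [0,∞) such that for every t ∈ [0,∞)∖N and every z ∈ 𝔻 the limit G(z,t) := lim_{h→0⁺} (φ_{t,t+h}(z) − z)/h exists, and for each t ∉ N the map z ↦ G(z,t) is holomorphic on 𝔻. Moreover, setting G(z,t) := 0 for t ∈ N, the function G is an associated vector field of the family: for every z ∈ 𝔻 and all 0 ≤ s ≤ t, φ_{s,t}(z) = z + ∫_s^t G(φ_{s,ξ}(z), ξ) dξ. -/

import Mathlib

open Complex MeasureTheory Set Filter Topology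

/-- The open unit disk `𝔻`. -/
def UD : Set ℂ := {z : ℂ | ‖z‖ < 1}

/-- A (continuous) evolution family in the unit disk: a two-parameter family of
holomorphic self-maps of `𝔻` satisfying the algebraic identities and a local
absolute-continuity condition. -/
structure EvolutionFamilyUD where
  φ : ℝ → ℝ → ℂ → ℂ
  mapsTo : ∀ ⦃s t : ℝ⦄, 0 ≤ s → s ≤ t → Set.MapsTo (φ s t) UD UD
  holo : ∀ ⦃s t : ℝ⦄, 0 ≤ s → s ≤ t → DifferentiableOn ℂ (φ s t) UD
  id_eq : ∀ ⦃s : ℝ⦄, 0 ≤ s → ∀ z ∈ UD, φ s s z = z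
  comp : ∀ ⦃s u t : ℝ⦄, 0 ≤ s → s ≤ u → u ≤ t → ∀ z ∈ UD,
    φ s t z = φ u t (φ s u z)
  ac : ∀ z ∈ UD, ∀ T : ℝ, 0 < T →
    ∃ k : ℝ → ℝ, (∀ ξ, 0 ≤ k ξ) ∧ MeasureTheory.IntegrableOn k (Set.Icc 0 T) ∧
      ∀ ⦃s u t : ℝ⦄, 0 ≤ s → s ≤ u → u ≤ t → t ≤ T →
        ‖φ s u z - φ s t z‖ ≤ ∫ ξ in u..t, k ξ

open scoped ENNReal NNReal

namespace Complex

/-- Compatibility: the complex absolute value as an `AbsoluteValue`. -/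
noncomputable def abs : AbsoluteValue ℂ ℝ where
  toFun z := ‖z‖
  map_mul' := norm_mul
  nonneg' := norm_nonneg
  eq_zero' _ := norm_eq_zero
  add_le' := norm_add_le

lemma norm_eq_abs (z : ℂ) : ‖z‖ = Complex.abs z := rfl

lemma abs_conj (z : ℂ) : Complex.abs ((starRingEnd ℂ) z) = Complex.abs z := norm_conj z

lemma abs_two : Complex.abs 2 = 2 := Complex.norm_two

lemma abs_ofReal (r : ℝ) : Complex.abs (r : ℂ) = |r| := Complex.norm_real r

lemma sq_abs (z : ℂ) : Complex.abs z ^ 2 = Complex.normSq z := Complex.sq_norm z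

lemma abs_re_le_abs (z : ℂ) : |z.re| ≤ Complex.abs z := Complex.abs_re_le_norm z

lemma abs_im_le_abs (z : ℂ) : |z.im| ≤ Complex.abs z := Complex.abs_im_le_norm z

lemma continuous_abs : Continuous Complex.abs := continuous_norm

lemma abs_le_abs_of_mapsTo_ball_self {f : ℂ → ℂ} {R : ℝ} {z : ℂ}
    (hd : DifferentiableOn ℂ f (Metric.ball 0 R))
    (h_maps : MapsTo f (Metric.ball 0 R) (Metric.ball 0 R)) (h₀ : f 0 = 0)
    (hz : Complex.abs z < R) : Complex.abs (f z) ≤ Complex.abs z :=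
  Complex.norm_le_norm_of_mapsTo_ball hd (h_maps.mono_right Metric.ball_subset_closedBall) h₀ hz

end Complex

lemma UD_eq : UD = Metric.ball (0:ℂ) 1 := by
  ext z; simp [UD, Metric.mem_ball, Complex.dist_eq]

lemma isOpen_UD : IsOpen UD := UD_eq ▸ Metric.isOpen_ball

lemma normSq_mobius_sub (a w : ℂ) :
    Complex.normSq (w - a) + (1 - Complex.normSq a) * (1 - Complex.normSq w)
      = Complex.normSq (1 - (starRingEnd ℂ) a * w) := by
  simp only [Complex.normSq_apply, Complex.sub_re, Complex.sub_im, Complex.mul_re,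
    Complex.mul_im, Complex.one_re, Complex.one_im, Complex.conj_re, Complex.conj_im]
  ring

lemma mobius_denom_ne {a w : ℂ} (ha : Complex.abs a < 1) (hw : Complex.abs w < 1) :
    (1 : ℂ) - (starRingEnd ℂ) a * w ≠ 0 := by
  intro h
  have h2 : Complex.abs ((starRingEnd ℂ) a * w) < 1 := by
    rw [map_mul, Complex.abs_conj]
    nlinarith [Complex.abs.nonneg a, Complex.abs.nonneg w]
  have : (starRingEnd ℂ) a * w = 1 := by linear_combination -h
  rw [this] at h2; simp at h2

lemma mobius_lt_one {a w : ℂ} (ha : Complex.abs a < 1) (hw : Complex.abs w < 1) :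
    Complex.abs ((w - a) / (1 - (starRingEnd ℂ) a * w)) < 1 := by
  rw [map_div₀, div_lt_one]
  · have key := normSq_mobius_sub a w
    have h1 : Complex.normSq a < 1 := by rw [← Complex.sq_abs]; nlinarith [Complex.abs.nonneg a]
    have h2 : Complex.normSq w < 1 := by rw [← Complex.sq_abs]; nlinarith [Complex.abs.nonneg w]
    have : Complex.normSq (w - a) < Complex.normSq (1 - (starRingEnd ℂ) a * w) := by nlinarith
    rw [← Complex.sq_abs, ← Complex.sq_abs] at this
    nlinarith [Complex.abs.nonneg (w - a), Complex.abs.nonneg (1 - (starRingEnd ℂ) a * w)]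
  · rw [AbsoluteValue.pos_iff]; exact mobius_denom_ne ha hw

lemma mobius_inverse {b w : ℂ} (hb : Complex.abs b < 1) (hw : Complex.abs w < 1) :
    ((w - b)/(1 - (starRingEnd ℂ) b * w) - (-b)) /
      (1 - (starRingEnd ℂ) (-b) * ((w - b)/(1 - (starRingEnd ℂ) b * w))) = w := by
  have hb' : Complex.abs (-b) < 1 := by rwa [Complex.abs.map_neg]
  have h1 := mobius_denom_ne hb hw
  have h2 : (1:ℂ) - (starRingEnd ℂ) (-b) * ((w - b)/(1 - (starRingEnd ℂ) b * w)) ≠ 0 :=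
    mobius_denom_ne hb' (mobius_lt_one hb hw)
  rw [map_neg] at h2 ⊢
  rw [div_eq_iff h2]
  have h1' : (1:ℂ) - w * (starRingEnd ℂ) b ≠ 0 := by rwa [mul_comm]
  field_simp
  ring

lemma abs_half : Complex.abs (1/2 : ℂ) = 1/2 := by
  rw [map_div₀, map_one, Complex.abs_two]

lemma half_mem_UD : (1/2 : ℂ) ∈ UD := by
  simp only [UD, mem_setOf_eq, abs_half]; norm_num

lemma abs_sub_le' (x y : ℂ) : Complex.abs (x - y) ≤ Complex.abs x + Complex.abs y := by
  simpa using Complex.abs.sub_le x 0 y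

lemma one_sub_abs_le (x : ℂ) : 1 - Complex.abs x ≤ Complex.abs (1 - x) := by
  have := norm_sub_norm_le (1:ℂ) x
  simpa [Complex.norm_eq_abs] using this

set_option maxHeartbeats 2000000 in
/-- Two-point Schwarz-type rigidity: a holomorphic self-map of the disk that nearly
fixes `0` and `1/2` is uniformly close to the identity on compact subsets. -/

lemma two_point {f : ℂ → ℂ} (hd : DifferentiableOn ℂ f UD) (hm : MapsTo f UD UD)
    {ε r : ℝ} (hε : 0 ≤ ε) (hr0 : 0 ≤ r) (hr1 : r < 1)
    (h0 : Complex.abs (f 0) ≤ ε) (hb : Complex.abs (f (1/2) - 1/2) ≤ ε) :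
    ∀ z : ℂ, Complex.abs z ≤ r → Complex.abs (f z - z) ≤ 300 / (1 - r^2) * ε := by
  have hr2 : 0 < 1 - r^2 := by nlinarith
  have hrr : 1 ≤ 1/(1 - r^2) := by rw [le_div_iff₀ hr2]; nlinarith
  intro z hz
  have hzU : z ∈ UD := by simp only [UD, mem_setOf_eq, Complex.norm_eq_abs]; linarith
  by_cases hbig : 1/2 < ε
  · have h1 : Complex.abs (f z) < 1 := hm hzU
    have : Complex.abs (f z - z) ≤ 2 := by
      have := abs_sub_le' (f z) z
      simp only [UD, mem_setOf_eq] at hzU; linarith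
    calc Complex.abs (f z - z) ≤ 2 := this
      _ ≤ 300 / (1 - r^2) * ε := by
          rw [div_mul_eq_mul_div, le_div_iff₀ hr2]; nlinarith
  push_neg at hbig
  -- small ε case
  set a := f 0 with ha_def
  have haU : a ∈ UD := hm (by simp [UD])
  have ha : Complex.abs a < 1 := haU
  have ha2 : Complex.abs a ≤ ε := h0
  set c := starRingEnd ℂ
  set g : ℂ → ℂ := fun w => (f w - a) / (1 - c a * f w) with hg_def
  have hden : ∀ w ∈ UD, (1:ℂ) - c a * f w ≠ 0 := fun w hw => mobius_denom_ne ha (hm hw)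
  have habs_den : ∀ w ∈ UD, 1/2 ≤ Complex.abs (1 - c a * f w) := by
    intro w hw
    have hfw : Complex.abs (f w) < 1 := hm hw
    have h1 : Complex.abs (c a * f w) ≤ 1/2 := by
      rw [map_mul, Complex.abs_conj]
      nlinarith [Complex.abs.nonneg a, Complex.abs.nonneg (f w)]
    have := one_sub_abs_le (c a * f w)
    linarith
  have hgm : ∀ w ∈ UD, Complex.abs (g w) < 1 := fun w hw => mobius_lt_one ha (hm hw)
  have hgd : DifferentiableOn ℂ g UD := by
    apply DifferentiableOn.div (hd.sub (differentiableOn_const a))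
      ((differentiableOn_const 1).sub ((differentiableOn_const (c a)).mul hd))
    exact hden
  have hg0 : g 0 = 0 := by simp [hg_def, ← ha_def]
  have hfg : ∀ w ∈ UD, Complex.abs (f w - g w) ≤ 4 * ε := by
    intro w hw
    have hgw : g w * (1 - c a * f w) = f w - a := by
      rw [hg_def]; exact div_mul_cancel₀ _ (hden w hw)
    have hval : f w - g w = (a - c a * (f w)^2) / (1 - c a * f w) := by
      rw [eq_div_iff (hden w hw)]; linear_combination -hgw
    rw [hval, map_div₀]
    have hnum : Complex.abs (a - c a * (f w)^2) ≤ 2 * ε := by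
      have t1 := abs_sub_le' a (c a * (f w)^2)
      rw [map_mul, Complex.abs_conj, map_pow] at t1
      have hfw : Complex.abs (f w) < 1 := hm hw
      have h2 : Complex.abs (f w)^2 ≤ 1 := by nlinarith [Complex.abs.nonneg (f w)]
      have h3 : Complex.abs a * Complex.abs (f w)^2 ≤ Complex.abs a * 1 :=
        mul_le_mul_of_nonneg_left h2 (Complex.abs.nonneg a)
      linarith
    have hd2 := habs_den w hw
    rw [div_le_iff₀ (by linarith)]
    nlinarith
  -- the quotient `q : z ↦ g z / z` is a self-map of the closed disk
  set q : ℂ → ℂ := dslope g 0 with hq_def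
  have hUD0 : UD ∈ 𝓝 (0:ℂ) := isOpen_UD.mem_nhds (by simp [UD])
  have hqd : DifferentiableOn ℂ q UD := (differentiableOn_dslope hUD0).mpr hgd
  have hball : Metric.ball (0:ℂ) 1 = UD := UD_eq.symm
  have hq1 : ∀ w ∈ UD, Complex.abs (q w) ≤ 1 := by
    intro w hw
    have h := Complex.norm_dslope_le_div_of_mapsTo_ball (f := g) (c := (0:ℂ)) (R₁ := 1) (R₂ := 1)
      (by rw [hball]; exact hgd)
      (by rw [hball, hg0]; exact fun x hx => Metric.mem_closedBall.mpr (by rw [Complex.dist_eq, sub_zero]; exact (hgm x hx).le))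
      (z := w) (by rw [hball]; exact hw)
    rw [Complex.norm_eq_abs] at h
    simpa using h
  have hgq : ∀ w, g w = w * q w := by
    intro w
    rcases eq_or_ne w 0 with rfl | hw0
    · simp [hg0]
    · rw [hq_def, dslope_of_ne _ hw0, slope_def_field, hg0]
      field_simp
      ring
  set p : ℂ → ℂ := q with hp_def -- dummy
  have hqhalf : Complex.abs (q (1/2) - 1) ≤ 10 * ε := by
    have h1 : g (1/2) = (1/2 : ℂ) * q (1/2) := hgq _
    have h2 : Complex.abs (g (1/2) - 1/2) ≤ 5 * ε := by
      have t := Complex.abs.sub_le (g (1/2)) (f (1/2)) (1/2 : ℂ)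
      have t2 : Complex.abs (g (1/2) - f (1/2)) = Complex.abs (f (1/2) - g (1/2)) :=
        Complex.abs.map_sub _ _
      have t3 := hfg (1/2 : ℂ) half_mem_UD
      rw [t2] at t
      linarith
    have h3 : (1/2:ℂ) * (q (1/2) - 1) = g (1/2) - 1/2 := by rw [h1]; ring
    have h4 : Complex.abs ((1/2:ℂ) * (q (1/2) - 1)) = (1/2) * Complex.abs (q (1/2) - 1) := by
      rw [map_mul, abs_half]
    rw [h3] at h4
    linarith
  -- main bound on `q` near `1` on the disk of radius `r`
  have hqz1 : Complex.abs (q z - 1) ≤ 120/(1 - r^2) * ε + 10 * ε := by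
    by_cases hcon : ∃ z₀ ∈ UD, Complex.abs (q z₀) = 1
    · obtain ⟨z₀, hz₀U, hz₀⟩ := hcon
      have hmax : IsMaxOn (norm ∘ q) UD z₀ := by
        intro x hx
        simp only [Function.comp_apply, Complex.norm_eq_abs, mem_setOf_eq]
        rw [hz₀]; exact hq1 x hx
      have heq := Complex.eqOn_of_isPreconnected_of_isMaxOn_norm
        (UD_eq ▸ (convex_ball (0:ℂ) 1).isPreconnected) isOpen_UD hqd hz₀U hmax
      have e1 : q z = q z₀ := heq hzU
      have e2 : q (1/2) = q z₀ := heq half_mem_UD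
      rw [e1, ← e2]
      have : (0:ℝ) ≤ 120/(1-r^2) * ε := by positivity
      linarith
    · push_neg at hcon
      have hqlt : ∀ w ∈ UD, Complex.abs (q w) < 1 := fun w hw =>
        lt_of_le_of_ne (hq1 w hw) (hcon w hw)
      have hc2 : (starRingEnd ℂ) (1/2 : ℂ) = 1/2 := by
        rw [map_div₀, map_one, map_ofNat]
      have hcn2 : (starRingEnd ℂ) (-(1/2) : ℂ) = -(1/2) := by rw [map_neg, hc2]
      have habs_nhalf : Complex.abs (-(1/2) : ℂ) < 1 := by
        rw [Complex.abs.map_neg, abs_half]; norm_num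
      have habs_half : Complex.abs (1/2 : ℂ) < 1 := by rw [abs_half]; norm_num
      set P : ℂ := q (1/2) with hP_def
      have hP : Complex.abs P < 1 := hqlt _ half_mem_UD
      set σ : ℂ → ℂ := fun ζ => (ζ - (-(1/2))) / (1 - (starRingEnd ℂ) (-(1/2)) * ζ) with hσ_def
      set τ : ℂ → ℂ := fun w => (w - 1/2) / (1 - (starRingEnd ℂ) (1/2 : ℂ) * w) with hτ_def
      have hσmem : ∀ ζ ∈ UD, σ ζ ∈ UD := fun ζ hζ => mobius_lt_one habs_nhalf hζ
      have hτmem : ∀ w ∈ UD, τ w ∈ UD := fun w hw => mobius_lt_one habs_half hw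
      have hσ0 : σ 0 = 1/2 := by
        rw [hσ_def]; simp
      set H : ℂ → ℂ := fun ζ => (q (σ ζ) - P) / (1 - (starRingEnd ℂ) P * q (σ ζ)) with hH_def
      have hHmem : ∀ ζ ∈ UD, Complex.abs (H ζ) < 1 :=
        fun ζ hζ => mobius_lt_one hP (hqlt _ (hσmem ζ hζ))
      have hH0 : H 0 = 0 := by
        rw [hH_def]; simp only [hσ0, ← hP_def, sub_self, zero_div]
      have hσd : DifferentiableOn ℂ σ UD := by
        apply DifferentiableOn.div
          ((differentiableOn_id).sub (differentiableOn_const _))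
          ((differentiableOn_const _).sub ((differentiableOn_const _).mul differentiableOn_id))
        exact fun ζ hζ => mobius_denom_ne habs_nhalf hζ
      have hqσd : DifferentiableOn ℂ (q ∘ σ) UD := hqd.comp hσd hσmem
      have hHd : DifferentiableOn ℂ H UD := by
        apply DifferentiableOn.div
          (hqσd.sub (differentiableOn_const _))
          ((differentiableOn_const _).sub ((differentiableOn_const _).mul hqσd))
        exact fun ζ hζ => mobius_denom_ne hP (hqlt _ (hσmem ζ hζ))
      have hHs : ∀ ζ ∈ UD, Complex.abs (H ζ) ≤ Complex.abs ζ := by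
        intro ζ hζ
        exact Complex.abs_le_abs_of_mapsTo_ball_self
          (by rw [hball]; exact hHd)
          (by rw [hball]; intro x hx; exact hHmem x hx) hH0 hζ
      -- apply at `τ z`
      have hτzU : τ z ∈ UD := hτmem z hzU
      have hden1 : (1:ℂ) - (starRingEnd ℂ) (1/2 : ℂ) * z ≠ 0 := mobius_denom_ne habs_half hzU
      have hden2 : (1:ℂ) - (starRingEnd ℂ) (-(1/2) : ℂ) * τ z ≠ 0 := mobius_denom_ne habs_nhalf hτzU
      have hστ : σ (τ z) = z := by
        rw [hσ_def, hτ_def]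
        exact mobius_inverse habs_half hzU
      -- quantitative bound on `m = |τ z|`
      set m : ℝ := Complex.abs (τ z) with hm_def
      have hm0 : 0 ≤ m := Complex.abs.nonneg _
      have hm1 : m < 1 := hτzU
      have hmsq : m^2 ≤ 1 - (1 - r^2)/3 := by
        have key := normSq_mobius_sub (1/2 : ℂ) z
        have hnsh : Complex.normSq (1/2 : ℂ) = 1/4 := by
          rw [← Complex.sq_abs, abs_half]; norm_num
        have hnz : Complex.normSq z ≤ r^2 := by
          rw [← Complex.sq_abs]
          nlinarith [Complex.abs.nonneg z]
        have hnz0 : 0 ≤ Complex.normSq z := Complex.normSq_nonneg z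
        have hdenbound : Complex.normSq (1 - (starRingEnd ℂ) (1/2 : ℂ) * z) ≤ 9/4 := by
          rw [← Complex.sq_abs]
          have t1 : Complex.abs (1 - (starRingEnd ℂ) (1/2 : ℂ) * z) ≤ 3/2 := by
            have := abs_sub_le' (1:ℂ) ((starRingEnd ℂ) (1/2 : ℂ) * z)
            rw [map_mul, Complex.abs_conj, abs_half, map_one] at this
            nlinarith
          nlinarith [Complex.abs.nonneg (1 - (starRingEnd ℂ) (1/2 : ℂ) * z)]
        have hdenpos : 0 < Complex.normSq (1 - (starRingEnd ℂ) (1/2 : ℂ) * z) :=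
          Complex.normSq_pos.mpr hden1
        have hmsq' : m^2 = Complex.normSq (z - 1/2) /
            Complex.normSq (1 - (starRingEnd ℂ) (1/2 : ℂ) * z) := by
          rw [hm_def, ← Complex.sq_abs, hτ_def]
          rw [map_div₀, div_pow, Complex.sq_abs, Complex.sq_abs]
        rw [hmsq']
        rw [div_le_iff₀ hdenpos]
        nlinarith
      have hmc : (1 - r^2)/6 ≤ 1 - m := by nlinarith
      -- unwind the bound
      have hqzlt : Complex.abs (q z) < 1 := hqlt z hzU
      have hdenP : (1:ℂ) - (starRingEnd ℂ) P * q z ≠ 0 := mobius_denom_ne hP hqzlt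
      have hHτ : Complex.abs ((q z - P) / (1 - (starRingEnd ℂ) P * q z)) ≤ m := by
        have := hHs (τ z) hτzU
        rw [hH_def] at this
        simp only [hστ] at this
        exact this
      have hX : Complex.abs (q z - P) ≤ m * Complex.abs (1 - (starRingEnd ℂ) P * q z) := by
        rw [map_div₀] at hHτ
        rw [← div_le_iff₀ (AbsoluteValue.pos Complex.abs hdenP)]
        exact hHτ
      have hnsP : Complex.normSq P = Complex.abs P ^ 2 := (Complex.sq_abs P).symm
      have htri : Complex.abs (1 - (starRingEnd ℂ) P * q z)
          ≤ (1 - Complex.normSq P) + Complex.abs (q z - P) := by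
        have hPP : (starRingEnd ℂ) P * P = (Complex.normSq P : ℂ) := by
          rw [mul_comm, Complex.mul_conj]
        have hid : (1:ℂ) - (starRingEnd ℂ) P * q z
            = ((1 - Complex.normSq P : ℝ) : ℂ) + (starRingEnd ℂ) P * (P - q z) := by
          push_cast
          rw [← hPP]; ring
        rw [hid]
        have t1 := Complex.abs.add_le ((1 - Complex.normSq P : ℝ) : ℂ)
          ((starRingEnd ℂ) P * (P - q z))
        have t2 : Complex.abs ((1 - Complex.normSq P : ℝ) : ℂ) = 1 - Complex.normSq P := by
          rw [Complex.abs_ofReal, _root_.abs_of_nonneg]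
          nlinarith [Complex.abs.nonneg P]
        have t3 : Complex.abs ((starRingEnd ℂ) P * (P - q z)) ≤ Complex.abs (q z - P) := by
          rw [map_mul, Complex.abs_conj, Complex.abs.map_sub P (q z)]
          exact mul_le_of_le_one_left (Complex.abs.nonneg _) hP.le
        linarith
      set X : ℝ := Complex.abs (q z - P) with hX_def
      have hX0 : 0 ≤ X := Complex.abs.nonneg _
      have hP1 : 1 - Complex.normSq P ≤ 2 * (10 * ε) := by
        have t1 := one_sub_abs_le P
        have t2 : Complex.abs (1 - P) = Complex.abs (P - 1) := Complex.abs.map_sub _ _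
        have t3 : Complex.abs (P - 1) ≤ 10 * ε := by rw [hP_def]; exact hqhalf
        nlinarith [Complex.abs.nonneg P, hP.le]
      have hkey : X * ((1 - r^2)/6) ≤ 20 * ε := by
        have h1 : X ≤ m * ((1 - Complex.normSq P) + X) :=
          le_trans hX (mul_le_mul_of_nonneg_left htri hm0)
        have hnsP0 : 0 ≤ 1 - Complex.normSq P := by nlinarith [Complex.abs.nonneg P, hP.le]
        nlinarith
      have hXle : X ≤ 120/(1 - r^2) * ε := by
        rw [div_mul_eq_mul_div, le_div_iff₀ hr2]
        nlinarith
      have final := Complex.abs.sub_le (q z) P 1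
      have t3 : Complex.abs (P - 1) ≤ 10 * ε := by rw [hP_def]; exact hqhalf
      linarith
  -- conclusion
  have hfin1 := Complex.abs.sub_le (f z) (g z) z
  have hfin2 : Complex.abs (g z - z) = Complex.abs z * Complex.abs (q z - 1) := by
    rw [hgq z, ← map_mul]; ring_nf; rfl
  have hfin3 := hfg z hzU
  have habsz1 : Complex.abs z ≤ 1 := by linarith
  have hmulle : Complex.abs z * Complex.abs (q z - 1) ≤ Complex.abs (q z - 1) :=
    mul_le_of_le_one_left (Complex.abs.nonneg _) habsz1
  set u := 1/(1 - r^2) with hu_def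
  have hu : (1 - r^2) * u = 1 := by rw [hu_def]; field_simp
  have h120 : 120/(1 - r^2) = 120 * u := by rw [hu_def]; ring
  have h300 : 300/(1 - r^2) = 300 * u := by rw [hu_def]; ring
  rw [h120] at hqz1
  rw [h300]
  nlinarith [mul_le_mul_of_nonneg_right hrr hε]

lemma stieltjes_deriv (SF : StieltjesFunction ℝ) (hac : SF.measure ≪ volume) :
    (∀ᵐ x, HasDerivAt SF ((SF.measure.rnDeriv volume x).toReal) x) ∧
    (∀ u t : ℝ, u ≤ t → SF t - SF u = ∫ x in Ioc u t, (SF.measure.rnDeriv volume x).toReal) ∧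
    (∀ a b : ℝ, IntegrableOn (fun x => (SF.measure.rnDeriv volume x).toReal) (Icc a b)) := by
  have hWD : volume.withDensity (SF.measure.rnDeriv volume) = SF.measure :=
    MeasureTheory.Measure.withDensity_rnDeriv_eq _ _ hac
  have hmeas : Measurable (SF.measure.rnDeriv volume) := Measure.measurable_rnDeriv _ _
  have hlt : ∀ᵐ x, SF.measure.rnDeriv volume x < ⊤ := Measure.rnDeriv_lt_top _ _
  refine ⟨SF.ae_hasDerivAt, ?_, ?_⟩
  · intro u t hut
    have h1 : SF.measure (Ioc u t) = ENNReal.ofReal (SF t - SF u) := SF.measure_Ioc u t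
    have h2 : SF.measure (Ioc u t) = ∫⁻ x in Ioc u t, SF.measure.rnDeriv volume x := by
      conv_lhs => rw [← hWD]
      rw [withDensity_apply _ measurableSet_Ioc]
    have h3 : ∫ x in Ioc u t, (SF.measure.rnDeriv volume x).toReal
        = (∫⁻ x in Ioc u t, SF.measure.rnDeriv volume x).toReal := by
      apply integral_toReal hmeas.aemeasurable
      exact ae_restrict_of_ae hlt
    rw [h3, ← h2, h1, ENNReal.toReal_ofReal]
    exact sub_nonneg.mpr (SF.mono hut)
  · intro a b
    apply integrable_toReal_of_lintegral_ne_top hmeas.aemeasurable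
    have : ∫⁻ x in Icc a b, SF.measure.rnDeriv volume x = SF.measure (Icc a b) := by
      conv_rhs => rw [← hWD]
      rw [withDensity_apply _ measurableSet_Icc]
    rw [this]
    exact (isCompact_Icc.measure_lt_top).ne

lemma ftc_real {Φ k : ℝ → ℝ} {s T : ℝ} (hsT : s ≤ T)
    (hk0 : ∀ ξ, 0 ≤ k ξ) (hki : IntegrableOn k (Icc s T))
    (hac : ∀ u t : ℝ, s ≤ u → u ≤ t → t ≤ T → |Φ t - Φ u| ≤ ∫ ξ in u..t, k ξ) :
    ∃ g : ℝ → ℝ, IntegrableOn g (Icc s T) ∧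
      (∀ᵐ ξ, ξ ∈ Ioo s T → HasDerivAt Φ (g ξ) ξ) ∧
      (∀ t ∈ Icc s T, Φ t - Φ s = ∫ ξ in s..t, g ξ) := by
  classical
  set π : ℝ → ℝ := fun t => max s (min t T) with hπ_def
  have hπ_mem : ∀ t, π t ∈ Icc s T := fun t =>
    ⟨le_max_left _ _, max_le hsT (min_le_right _ _)⟩
  have hπ_mono : Monotone π := fun a b hab =>
    max_le_max le_rfl (min_le_min hab le_rfl)
  have hπ_id : ∀ t ∈ Icc s T, π t = t := by
    intro t ht
    rw [hπ_def]
    simp only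
    rw [min_eq_left ht.2, max_eq_right ht.1]
  have hπ_cont : Continuous π := continuous_const.max (continuous_id.min continuous_const)
  have hsub : ∀ a ∈ Icc s T, ∀ b ∈ Icc s T, IntervalIntegrable k volume a b := by
    intro a ha b hb
    exact (hki.mono_set (Set.uIcc_subset_Icc ha hb)).intervalIntegrable
  have hKadd : ∀ u ∈ Icc s T, ∀ t ∈ Icc s T, u ≤ t →
      (∫ ξ in s..t, k ξ) - (∫ ξ in s..u, k ξ) = ∫ ξ in u..t, k ξ := by
    intro u hu t ht hut
    have := intervalIntegral.integral_add_adjacent_intervals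
      (hsub s (left_mem_Icc.mpr hsT) u hu) (hsub u hu t ht)
    linarith
  set K : ℝ → ℝ := fun t => ∫ ξ in s..(π t), k ξ with hK_def
  have hKincr : ∀ u t : ℝ, u ≤ t → K t - K u = ∫ ξ in (π u)..(π t), k ξ := by
    intro u t hut
    exact hKadd (π u) (hπ_mem u) (π t) (hπ_mem t) (hπ_mono hut)
  have hKmono : Monotone K := by
    intro u t hut
    have h := hKincr u t hut
    have h2 : 0 ≤ ∫ ξ in (π u)..(π t), k ξ :=
      intervalIntegral.integral_nonneg (hπ_mono hut) (fun x _ => hk0 x)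
    linarith
  have hKcont : Continuous K := by
    have h1 : ContinuousOn (fun x => ∫ ξ in s..x, k ξ) (Icc s T) := by
      have := intervalIntegral.continuousOn_primitive_interval
        (a := s) (b := T) (μ := volume) (f := k) (by rwa [uIcc_of_le hsT])
      rwa [uIcc_of_le hsT] at this
    exact h1.comp_continuous hπ_cont hπ_mem
  -- the two monotone parts
  have hΦK : ∀ u t : ℝ, u ≤ t → |Φ (π t) - Φ (π u)| ≤ K t - K u := by
    intro u t hut
    rw [hKincr u t hut]
    exact hac (π u) (π t) (hπ_mem u).1 (hπ_mono hut) (hπ_mem t).2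
  have hΦπ_cont : Continuous (fun t => Φ (π t)) := by
    rw [continuous_iff_continuousAt]
    intro x
    rw [ContinuousAt, tendsto_iff_dist_tendsto_zero]
    apply squeeze_zero (fun t => dist_nonneg) (g := fun t => |K t - K x|)
    · intro t
      rcases le_total t x with h | h
      · have h1 := hΦK t x h
        rw [Real.dist_eq, abs_sub_comm]
        have h2 : K x - K t ≤ |K t - K x| := by rw [abs_sub_comm]; exact le_abs_self _
        have h3 := abs_le.mp h1
        rw [abs_le]; constructor <;> linarith [neg_abs_le (K t - K x)]
      · have h1 := hΦK x t h
        rw [Real.dist_eq]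
        have h3 := abs_le.mp h1
        rw [abs_le]; constructor <;> linarith [le_abs_self (K t - K x), neg_abs_le (K t - K x)]
    · have h := ((hKcont.tendsto x).sub (tendsto_const_nhds (x := K x))).abs
      simpa using h
  set A : ℝ → ℝ := fun t => Φ (π t) + K t with hA_def
  set B : ℝ → ℝ := fun t => K t - Φ (π t) with hB_def
  have hAmono : Monotone A := by
    intro u t hut
    have h1 := abs_le.mp (hΦK u t hut)
    show Φ (π u) + K u ≤ Φ (π t) + K t
    linarith [h1.1]
  have hBmono : Monotone B := by
    intro u t hut
    have h1 := abs_le.mp (hΦK u t hut)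
    show K u - Φ (π u) ≤ K t - Φ (π t)
    linarith [h1.2]
  have hAcont : Continuous A := hΦπ_cont.add hKcont
  have hBcont : Continuous B := hKcont.sub hΦπ_cont
  set SA : StieltjesFunction ℝ :=
    { toFun := A, mono' := hAmono,
      right_continuous' := fun x => (hAcont.continuousAt).continuousWithinAt } with hSA_def
  set SB : StieltjesFunction ℝ :=
    { toFun := B, mono' := hBmono,
      right_continuous' := fun x => (hBcont.continuousAt).continuousWithinAt } with hSB_def
  have hind_int : Integrable ((Icc s T).indicator k) volume := by
    rwa [integrable_indicator_iff measurableSet_Icc]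
  set κ : ℝ → ℝ≥0∞ := fun ξ => 2 * ENNReal.ofReal ((Icc s T).indicator k ξ) with hκ_def
  set ν : Measure ℝ := volume.withDensity κ with hν_def
  -- the interval sets agree up to the point `s`
  have hsetae : ∀ a b : ℝ, a ≤ b →
      (Ioc (π a) (π b) : Set ℝ) =ᵐ[volume] (Icc s T ∩ Ioc a b : Set ℝ) := by
    intro a b hab
    have hiff : ∀ x : ℝ, x ≠ s → (x ∈ Ioc (π a) (π b) ↔ x ∈ Icc s T ∩ Ioc a b) := by
      intro x hxs
      simp only [hπ_def, mem_Ioc, mem_Icc, mem_inter_iff]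
      constructor
      · rintro ⟨h1, h2⟩
        have hsx : s < x := lt_of_le_of_lt (le_max_left _ _) h1
        have hminb : x ≤ min b T := by
          rcases max_cases s (min b T) with ⟨he, hle⟩ | ⟨he, hlt⟩
          · rw [he] at h2; linarith
          · rw [he] at h2; exact h2
        have hminax : min a T < x := lt_of_le_of_lt (le_max_right _ _) h1
        have hax : a < x := by
          rcases le_total a T with haT | haT
          · rwa [min_eq_left haT] at hminax
          · rw [min_eq_right haT] at hminax
            have := le_trans hminb (min_le_right b T)
            linarith
        exact ⟨⟨hsx.le, le_trans hminb (min_le_right _ _)⟩, hax, le_trans hminb (min_le_left _ _)⟩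
      · rintro ⟨⟨hs1, hs2⟩, ha1, hb1⟩
        have hsx : s < x := lt_of_le_of_ne hs1 (Ne.symm hxs)
        constructor
        · exact max_lt hsx (lt_of_le_of_lt (min_le_left _ _) ha1)
        · exact le_max_of_le_right (le_min hb1 hs2)
    rw [Filter.eventuallyEq_set]
    have : ∀ᵐ x : ℝ, x ≠ s := by
      rw [ae_iff]
      have : {x : ℝ | ¬ x ≠ s} = {s} := by ext x; simp
      rw [this]
      exact Real.volume_singleton
    filter_upwards [this] with x hx
    exact hiff x hx
  have hmeq : SA.measure + SB.measure = ν := by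
    apply MeasureTheory.Measure.ext_of_Ioc' (SA.measure + SB.measure) ν
    · intro a b hab
      rw [Measure.add_apply, SA.measure_Ioc, SB.measure_Ioc]
      exact ENNReal.add_ne_top.mpr ⟨ENNReal.ofReal_ne_top, ENNReal.ofReal_ne_top⟩
    · intro a b hab
      rw [Measure.add_apply, SA.measure_Ioc, SB.measure_Ioc]
      have hAB : SA b - SA a + (SB b - SB a) = 2 * (K b - K a) := by
        show A b - A a + (B b - B a) = 2 * (K b - K a)
        simp only [hA_def, hB_def]; ring
      rw [← ENNReal.ofReal_add (sub_nonneg.mpr (hAmono hab.le)) (sub_nonneg.mpr (hBmono hab.le)),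
        hAB]
      have hKint : K b - K a = ∫ x in Icc s T ∩ Ioc a b, k x := by
        rw [hKincr a b hab.le, intervalIntegral.integral_of_le (hπ_mono hab.le)]
        exact setIntegral_congr_set (hsetae a b hab.le)
      rw [hν_def, withDensity_apply _ measurableSet_Ioc, hκ_def]
      rw [lintegral_const_mul' _ _ (by norm_num : (2:ℝ≥0∞) ≠ ⊤)]
      have hofReal : ∫⁻ x in Ioc a b, ENNReal.ofReal ((Icc s T).indicator k x)
          = ENNReal.ofReal (∫ x in Ioc a b, (Icc s T).indicator k x) := by
        rw [← ofReal_integral_eq_lintegral_ofReal (hind_int.integrableOn)]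
        exact Filter.Eventually.of_forall fun x => Set.indicator_nonneg (fun y _ => hk0 y) x
      rw [hofReal]
      have hindeq : ∫ x in Ioc a b, (Icc s T).indicator k x = ∫ x in Icc s T ∩ Ioc a b, k x := by
        rw [integral_indicator measurableSet_Icc, Measure.restrict_restrict measurableSet_Icc]
      rw [hindeq, ← hKint]
      rw [ENNReal.ofReal_mul (by norm_num : (0:ℝ) ≤ 2)]
      congr 1
      · rw [ENNReal.ofReal_ofNat]
  have hν_ac : ν ≪ volume := withDensity_absolutelyContinuous _ _
  have hA_ac : SA.measure ≪ volume := by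
    apply Measure.AbsolutelyContinuous.trans _ hν_ac
    apply Measure.absolutelyContinuous_of_le
    rw [← hmeq]
    exact Measure.le_add_right le_rfl
  have hB_ac : SB.measure ≪ volume := by
    apply Measure.AbsolutelyContinuous.trans _ hν_ac
    apply Measure.absolutelyContinuous_of_le
    rw [← hmeq]
    exact Measure.le_add_left le_rfl
  obtain ⟨hDA, hIA, hintA⟩ := stieltjes_deriv SA hA_ac
  obtain ⟨hDB, hIB, hintB⟩ := stieltjes_deriv SB hB_ac
  set gA : ℝ → ℝ := fun x => (SA.measure.rnDeriv volume x).toReal with hgA_def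
  set gB : ℝ → ℝ := fun x => (SB.measure.rnDeriv volume x).toReal with hgB_def
  refine ⟨fun x => (gA x - gB x)/2, ?_, ?_, ?_⟩
  · exact ((hintA s T).sub (hintB s T)).div_const 2
  · filter_upwards [hDA, hDB] with ξ hA hB hmem
    have h1 : HasDerivAt (fun x => (SA x - SB x)/2) ((gA ξ - gB ξ)/2) ξ :=
      (hA.sub hB).div_const 2
    apply h1.congr_of_eventuallyEq
    filter_upwards [Ioo_mem_nhds hmem.1 hmem.2] with x hx
    have hπx : π x = x := hπ_id x (Ioo_subset_Icc_self hx)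
    show Φ x = (A x - B x)/2
    simp only [hA_def, hB_def, hπx]
    ring
  · intro t ht
    have h1 := hIA s t ht.1
    have h2 := hIB s t ht.1
    have hπs : π s = s := hπ_id s (left_mem_Icc.mpr hsT)
    have hπt : π t = t := hπ_id t ht
    have hΦA : Φ t - Φ s = ((SA t - SA s) - (SB t - SB s))/2 := by
      show Φ t - Φ s = ((A t - A s) - (B t - B s))/2
      simp only [hA_def, hB_def, hπs, hπt]
      ring
    rw [hΦA, h1, h2]
    have hiA : IntegrableOn gA (Ioc s t) volume :=
      (hintA s T).mono_set (Ioc_subset_Icc_self.trans (Icc_subset_Icc le_rfl ht.2))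
    have hiB : IntegrableOn gB (Ioc s t) volume :=
      (hintB s T).mono_set (Ioc_subset_Icc_self.trans (Icc_subset_Icc le_rfl ht.2))
    rw [intervalIntegral.integral_of_le ht.1, ← integral_sub hiA hiB]
    rw [integral_div]

lemma ftc_complex {Φ : ℝ → ℂ} {k : ℝ → ℝ} {s T : ℝ} (hsT : s ≤ T)
    (hk0 : ∀ ξ, 0 ≤ k ξ) (hki : IntegrableOn k (Icc s T))
    (hac : ∀ u t : ℝ, s ≤ u → u ≤ t → t ≤ T → Complex.abs (Φ t - Φ u) ≤ ∫ ξ in u..t, k ξ) :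
    ∃ g : ℝ → ℂ,
      (∀ᵐ ξ, ξ ∈ Ioo s T → HasDerivAt Φ (g ξ) ξ) ∧
      (∀ t ∈ Icc s T, Φ t = Φ s + ∫ ξ in s..t, g ξ) := by
  have hacRe : ∀ u t : ℝ, s ≤ u → u ≤ t → t ≤ T →
      |(Φ t).re - (Φ u).re| ≤ ∫ ξ in u..t, k ξ := by
    intro u t h1 h2 h3
    refine le_trans ?_ (hac u t h1 h2 h3)
    rw [← Complex.sub_re]
    exact Complex.abs_re_le_abs _
  have hacIm : ∀ u t : ℝ, s ≤ u → u ≤ t → t ≤ T →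
      |(Φ t).im - (Φ u).im| ≤ ∫ ξ in u..t, k ξ := by
    intro u t h1 h2 h3
    refine le_trans ?_ (hac u t h1 h2 h3)
    rw [← Complex.sub_im]
    exact Complex.abs_im_le_abs _
  obtain ⟨ga, hgaI, hgaD, hgaF⟩ := ftc_real (Φ := fun x => (Φ x).re) hsT hk0 hki hacRe
  obtain ⟨gb, hgbI, hgbD, hgbF⟩ := ftc_real (Φ := fun x => (Φ x).im) hsT hk0 hki hacIm
  refine ⟨fun x => (ga x : ℂ) + (gb x : ℂ) * Complex.I, ?_, ?_⟩
  · filter_upwards [hgaD, hgbD] with ξ ha hb hmem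
    have h1 : HasDerivAt (fun x => ((Φ x).re : ℂ) + ((Φ x).im : ℂ) * Complex.I)
        ((ga ξ : ℂ) + (gb ξ : ℂ) * Complex.I) ξ :=
      ((ha hmem).ofReal_comp).add (((hb hmem).ofReal_comp).mul_const Complex.I)
    have heq : (fun x => ((Φ x).re : ℂ) + ((Φ x).im : ℂ) * Complex.I) = Φ :=
      funext fun x => Complex.re_add_im (Φ x)
    rwa [heq] at h1
  · intro t ht
    have e1 := hgaF t ht
    have e2 := hgbF t ht
    have hsub : Icc s t ⊆ Icc s T := Icc_subset_Icc le_rfl ht.2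
    have hia : IntervalIntegrable ga volume s t :=
      ((hgaI.mono_set hsub).mono_set (by rw [uIcc_of_le ht.1])).intervalIntegrable
    have hib : IntervalIntegrable gb volume s t :=
      ((hgbI.mono_set hsub).mono_set (by rw [uIcc_of_le ht.1])).intervalIntegrable
    have hiaC : IntervalIntegrable (fun x => (ga x : ℂ)) volume s t := ⟨hia.1.ofReal, hia.2.ofReal⟩
    have hibC : IntervalIntegrable (fun x => (gb x : ℂ) * Complex.I) volume s t :=
      ⟨hib.1.ofReal.mul_const _, hib.2.ofReal.mul_const _⟩
    rw [intervalIntegral.integral_add hiaC hibC, intervalIntegral.integral_mul_const,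
      intervalIntegral.integral_ofReal, intervalIntegral.integral_ofReal]
    apply Complex.ext
    · simp only [Complex.add_re, Complex.ofReal_re, Complex.mul_re, Complex.I_re, Complex.I_im,
        Complex.ofReal_im, mul_zero, mul_one, zero_mul, sub_zero, zero_sub, add_zero, zero_add]
      linarith
    · simp only [Complex.add_im, Complex.ofReal_im, Complex.mul_im, Complex.I_re, Complex.I_im,
        Complex.ofReal_re, mul_zero, mul_one, zero_mul, add_zero, zero_add]
      linarith

lemma lip_of_bound {f : ℂ → ℂ} {R M ρ : ℝ} (hRpos : 0 < R) (hM : 0 ≤ M)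
    (hd : DifferentiableOn ℂ f (Metric.ball 0 R))
    (hb : ∀ x ∈ Metric.ball (0:ℂ) R, Complex.abs (f x) ≤ M) (hρ : 0 ≤ ρ) (hρR : ρ < R) :
    ∀ w ∈ Metric.closedBall (0:ℂ) ρ, ∀ z ∈ Metric.closedBall (0:ℂ) ρ,
      Complex.abs (f z - f w) ≤ (2*M+1)/(R - ρ) * Complex.abs (z - w) := by
  intro w hw z hz
  have hRρ : 0 < R - ρ := by linarith
  have hwR : w ∈ Metric.ball (0:ℂ) R := by
    rw [Metric.mem_closedBall] at hw; rw [Metric.mem_ball]; linarith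
  have hsub : Metric.ball w (R - ρ) ⊆ Metric.ball (0:ℂ) R := by
    intro x hx
    rw [Metric.mem_ball] at hx ⊢
    rw [Metric.mem_closedBall] at hw
    calc dist x 0 ≤ dist x w + dist w 0 := dist_triangle _ _ _
      _ < R := by linarith
  have hfb : ∀ x ∈ Metric.ball (0:ℂ) R, Complex.abs (f x - f w) ≤ 2*M := by
    intro x hx
    calc Complex.abs (f x - f w) ≤ Complex.abs (f x) + Complex.abs (f w) := by
          simpa using Complex.abs.sub_le (f x) 0 (f w)
      _ ≤ 2*M := by linarith [hb x hx, hb w hwR]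
  by_cases hcase : Complex.abs (z - w) < R - ρ
  · -- Schwarz-type bound via dslope
    have hzball : z ∈ Metric.ball w (R - ρ) := by
      rw [Metric.mem_ball, Complex.dist_eq]; exact hcase
    have hmaps : Set.MapsTo f (Metric.ball w (R - ρ)) (Metric.ball (f w) (2*M+1)) := by
      intro x hx
      rw [Metric.mem_ball, Complex.dist_eq]
      exact lt_of_le_of_lt (hfb x (hsub hx)) (by linarith)
    have hds := Complex.norm_dslope_le_div_of_mapsTo_ball (hd.mono hsub) (hmaps.mono_right Metric.ball_subset_closedBall) hzball
    rcases eq_or_ne z w with rfl | hne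
    · simp
    · rw [dslope_of_ne _ hne, slope_def_field, norm_div, Complex.norm_eq_abs,
        Complex.norm_eq_abs] at hds
      rw [div_le_div_iff₀ (AbsoluteValue.pos Complex.abs (sub_ne_zero.mpr hne)) hRρ] at hds
      rw [div_mul_eq_mul_div, le_div_iff₀ hRρ]
      linarith
  · push_neg at hcase
    have h1 : Complex.abs (f z - f w) ≤ 2*M := hfb z (by
      rw [Metric.mem_closedBall] at hz; rw [Metric.mem_ball]; linarith)
    have h2 : (2*M+1) ≤ (2*M+1)/(R - ρ) * Complex.abs (z - w) := by
      rw [div_mul_eq_mul_div, le_div_iff₀ hRρ]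
      nlinarith
    linarith

/-- Uniform convergence on a compact set from pointwise convergence plus a uniform
Lipschitz estimate. -/

lemma tendstoUniformlyOn_of_lip {ι : Type*} {p : Filter ι} [p.NeBot]
    {F : ι → ℂ → ℂ} {G : ℂ → ℂ} {K : Set ℂ} (hK : IsCompact K) {L : ℝ} (hL : 0 ≤ L)
    (hlip : ∀ᶠ n in p, ∀ w ∈ K, ∀ z ∈ K, Complex.abs (F n z - F n w) ≤ L * Complex.abs (z - w))
    (hpt : ∀ z ∈ K, Tendsto (fun n => F n z) p (𝓝 (G z))) :
    TendstoUniformlyOn F G p K := by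
  have hGlip : ∀ w ∈ K, ∀ z ∈ K, Complex.abs (G z - G w) ≤ L * Complex.abs (z - w) := by
    intro w hw z hz
    have ht : Tendsto (fun n => Complex.abs (F n z - F n w)) p (𝓝 (Complex.abs (G z - G w))) :=
      (Complex.continuous_abs.tendsto _).comp ((hpt z hz).sub (hpt w hw))
    apply le_of_tendsto ht
    filter_upwards [hlip] with n hn using hn w hw z hz
  rw [Metric.tendstoUniformlyOn_iff]
  intro ε hε
  set δ : ℝ := ε/(6*(L+1)) with hδ_def
  have hδ : 0 < δ := by positivity
  have hLδ : L * δ ≤ ε/6 := by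
    have h1 : L * δ = ε * L / (6*(L+1)) := by rw [hδ_def]; ring
    rw [h1, div_le_div_iff₀ (by positivity) (by norm_num : (0:ℝ) < 6)]
    nlinarith [hε.le]
  obtain ⟨tt, htK, htfin, hcover⟩ := hK.elim_finite_subcover_image
    (fun z (_ : z ∈ K) => Metric.isOpen_ball (x := z) (ε := δ))
    (fun z hz => mem_biUnion hz (Metric.mem_ball_self hδ))
  have hev : ∀ᶠ n in p, ∀ w ∈ tt, dist (G w) (F n w) < ε/3 := by
    rw [eventually_all_finite htfin]
    intro w hw
    filter_upwards [Metric.tendsto_nhds.mp (hpt w (htK hw)) (ε/3) (by positivity)] with n hn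
    rwa [dist_comm]
  filter_upwards [hev, hlip] with n hn hlipn
  intro z hz
  rcases mem_iUnion₂.mp (hcover hz) with ⟨w, hwt, hwb⟩
  have hwK : w ∈ K := htK hwt
  have hzw : Complex.abs (z - w) ≤ δ := by
    rw [← Complex.norm_eq_abs, ← Complex.dist_eq]
    exact (Metric.mem_ball.mp hwb).le
  have h1 : Complex.abs (G z - G w) ≤ L * δ :=
    le_trans (hGlip w hwK z hz) (mul_le_mul_of_nonneg_left hzw hL)
  have h2 : Complex.abs (F n z - F n w) ≤ L * δ :=
    le_trans (hlipn w hwK z hz) (mul_le_mul_of_nonneg_left hzw hL)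
  have h3 := hn w hwt
  calc dist (G z) (F n z) ≤ dist (G z) (G w) + dist (G w) (F n w) + dist (F n w) (F n z) :=
        dist_triangle4 _ _ _ _
    _ ≤ L * δ + dist (G w) (F n w) + L * δ := by
        simp only [Complex.dist_eq, Complex.norm_eq_abs]
        have e1 : Complex.abs (F n w - F n z) = Complex.abs (F n z - F n w) :=
          Complex.abs.map_sub _ _
        rw [e1]
        linarith
    _ < ε := by linarith

/-- Existence of a limit at a point approximable by points where the limit exists,
for an eventually-equi-Lipschitz family. -/

lemma exists_lim_of_lip {ι : Type*} {p : Filter ι} [p.NeBot]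
    {F : ι → ℂ → ℂ} {K : Set ℂ} {L : ℝ} (hL : 0 ≤ L) {z : ℂ} (hz : z ∈ K)
    (hlip : ∀ᶠ n in p, ∀ w ∈ K, ∀ x ∈ K, Complex.abs (F n x - F n w) ≤ L * Complex.abs (x - w))
    (hdense : ∀ δ : ℝ, 0 < δ → ∃ w ∈ K, Complex.abs (z - w) < δ ∧
      ∃ c, Tendsto (fun n => F n w) p (𝓝 c)) :
    ∃ c, Tendsto (fun n => F n z) p (𝓝 c) := by
  have hcauchy : Cauchy (Filter.map (fun n => F n z) p) := by
    rw [Metric.cauchy_iff]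
    refine ⟨Filter.map_neBot, ?_⟩
    intro ε hε
    have hδ : 0 < ε/(3*(L+1)) := by positivity
    obtain ⟨w, hwK, hwz, c, hc⟩ := hdense (ε/(3*(L+1))) hδ
    have hLδ : L * (ε/(3*(L+1))) ≤ ε/3 := by
      have h1 : L * (ε/(3*(L+1))) = ε * L / (3*(L+1)) := by ring
      rw [h1, div_le_div_iff₀ (by positivity) (by norm_num : (0:ℝ) < 3)]
      nlinarith [hε.le]
    have hev : ∀ᶠ n in p, dist (F n w) c < ε/9 :=
      Metric.tendsto_nhds.mp hc (ε/9) (by positivity)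
    refine ⟨(fun n => F n z) '' {n | dist (F n w) c < ε/9 ∧
      ∀ w' ∈ K, ∀ x ∈ K, Complex.abs (F n x - F n w') ≤ L * Complex.abs (x - w')}, ?_, ?_⟩
    · exact image_mem_map (by filter_upwards [hev, hlip] with n h1 h2 using ⟨h1, h2⟩)
    · rintro x ⟨m, ⟨hm1, hm2⟩, rfl⟩ y ⟨n, ⟨hn1, hn2⟩, rfl⟩
      have e1 : Complex.abs (F m z - F m w) ≤ L * Complex.abs (z - w) := hm2 w hwK z hz
      have e2 : Complex.abs (F n z - F n w) ≤ L * Complex.abs (z - w) := hn2 w hwK z hz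
      have e3 : L * Complex.abs (z - w) ≤ ε/3 :=
        le_trans (mul_le_mul_of_nonneg_left hwz.le hL) hLδ
      have t1 : dist (F m z) (F n z) ≤ (dist (F m z) (F m w) + dist (F m w) c)
          + (dist c (F n w) + dist (F n w) (F n z)) := by
        calc dist (F m z) (F n z) ≤ dist (F m z) c + dist c (F n z) := dist_triangle _ _ _
          _ ≤ _ := add_le_add (dist_triangle _ _ _) (dist_triangle _ _ _)
      rw [dist_comm c (F n w)] at t1
      simp only [Complex.dist_eq, Complex.norm_eq_abs] at t1
      have e4 : Complex.abs (F n w - F n z) = Complex.abs (F n z - F n w) :=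
        Complex.abs.map_sub _ _
      rw [e4] at t1
      rw [Complex.dist_eq, Complex.norm_eq_abs] at hm1 hn1
      rw [Complex.dist_eq, Complex.norm_eq_abs]
      linarith
  obtain ⟨c, hc⟩ := CompleteSpace.complete hcauchy
  exact ⟨c, hc⟩

/-- The tail of the integral of an integrable nonnegative function is small:
we can find a rational `q < t` with `∫_q^t k` arbitrarily small. -/

lemma tail_small {k : ℝ → ℝ} {n : ℝ} (hk0 : ∀ x, 0 ≤ k x) (hki : IntegrableOn k (Icc 0 n))
    {t : ℝ} (ht : 0 < t) (htn : t ≤ n) {ε : ℝ} (hε : 0 < ε) :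
    ∃ q : ℚ, 0 ≤ (q:ℝ) ∧ (q:ℝ) < t ∧ ∫ ξ in (q:ℝ)..t, k ξ < ε := by
  set f : ℕ → ℝ → ℝ := fun j x => (Ioc (t - t/(j+1)) t).indicator k x with hf_def
  have htend : Tendsto (fun j => ∫ x in Icc 0 n, f j x) atTop (𝓝 (∫ x in Icc 0 n, (0:ℝ))) := by
    apply MeasureTheory.tendsto_integral_of_dominated_convergence k
    · intro j
      exact (hki.aestronglyMeasurable).indicator measurableSet_Ioc
    · exact hki
    · intro j
      apply Filter.Eventually.of_forall
      intro x
      rw [Real.norm_eq_abs, _root_.abs_of_nonneg (Set.indicator_nonneg (fun y _ => hk0 y) x)]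
      exact Set.indicator_le_self' (fun y _ => hk0 y) x
    · have hane : ∀ᵐ x : ℝ, x ≠ t := by
        rw [ae_iff]
        have h2 : {x : ℝ | ¬ x ≠ t} = {t} := by ext x; simp
        rw [h2]
        exact Real.volume_singleton
      apply ae_restrict_of_ae
      filter_upwards [hane] with x hx
      rcases lt_or_gt_of_ne hx with hlt | hgt
      · -- x < t : eventually x ∉ Ioc (t - t/(j+1)) t
        have : ∀ᶠ j : ℕ in atTop, f j x = 0 := by
          have htd : Tendsto (fun j : ℕ => t/(j+1)) atTop (𝓝 0) := by
            have h0 := (tendsto_const_div_atTop_nhds_zero_nat t).comp (tendsto_add_atTop_nat 1)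
            have heq2 : (fun j : ℕ => t/((j:ℝ)+1)) = (fun m : ℕ => t / (m:ℝ)) ∘ (fun j => j + 1) := by
              funext j
              simp [Function.comp, Nat.cast_add, Nat.cast_one]
            rw [heq2]
            exact h0
          have : ∀ᶠ j : ℕ in atTop, t/(j+1) < t - x := by
            exact htd.eventually (eventually_lt_nhds (by linarith))
          filter_upwards [this] with j hj
          rw [hf_def]
          apply Set.indicator_of_notMem
          rw [mem_Ioc]
          push_neg
          intro h; linarith
        apply Tendsto.congr' (this.mono fun j hj => hj.symm)
        exact tendsto_const_nhds
      · have : ∀ j : ℕ, f j x = 0 := by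
          intro j
          apply Set.indicator_of_notMem
          rw [mem_Ioc]; push_neg; intro h; linarith
        simp only [this]
        exact tendsto_const_nhds
  rw [integral_zero] at htend
  have hex : ∃ j : ℕ, ∫ x in Icc 0 n, f j x < ε := by
    have := (htend.eventually (eventually_lt_nhds hε)).exists
    exact this
  obtain ⟨j, hj⟩ := hex
  have hlow : max 0 (t - t/(j+1)) < t := by
    apply max_lt ht
    have : 0 < t/(j+1) := by positivity
    linarith
  obtain ⟨q, hq1, hq2⟩ := exists_rat_btwn hlow
  refine ⟨q, le_trans (le_max_left _ _) hq1.le, hq2, ?_⟩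
  have hqt : (q:ℝ) ≤ t := hq2.le
  rw [intervalIntegral.integral_of_le hqt]
  have hsub : Ioc (q:ℝ) t ⊆ Ioc (t - t/(j+1)) t ∩ Icc 0 n := by
    intro x hx
    rw [mem_Ioc] at hx
    constructor
    · rw [mem_Ioc]
      constructor
      · exact lt_trans (lt_of_le_of_lt (le_max_right 0 (t - t/(j+1))) hq1) hx.1
      · exact hx.2
    · rw [mem_Icc]
      constructor
      · exact le_trans (le_trans (le_max_left _ _) hq1.le) hx.1.le
      · linarith [hx.2]
  have heq : ∫ x in Icc 0 n, f j x = ∫ x in Ioc (t - t/(j+1)) t ∩ Icc 0 n, k x := by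
    rw [hf_def]
    rw [integral_indicator measurableSet_Ioc, Measure.restrict_restrict measurableSet_Ioc]
  have hki2 : IntegrableOn k (Ioc (t - t/(j+1)) t ∩ Icc 0 n) volume :=
    hki.mono_set inter_subset_right
  have hmono : ∫ x in Ioc (q:ℝ) t, k x ≤ ∫ x in Ioc (t - t/(j+1)) t ∩ Icc 0 n, k x := by
    apply setIntegral_mono_set hki2
    · exact Filter.Eventually.of_forall (fun x => hk0 x)
    · exact HasSubset.Subset.eventuallyLE hsub
  rw [heq] at hj
  linarith

lemma tendsto_add_right_punctured (t : ℝ) :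
    Tendsto (fun h' : ℝ => t + h') (𝓝[>] (0:ℝ)) (𝓝[≠] t) := by
  apply tendsto_nhdsWithin_of_tendsto_nhds_of_eventually_within
  · have h1 : Tendsto (fun h' : ℝ => t + h') (𝓝 0) (𝓝 (t + 0)) :=
      (continuous_const.add continuous_id).tendsto 0
    rw [add_zero] at h1
    exact h1.mono_left nhdsWithin_le_nhds
  · filter_upwards [self_mem_nhdsWithin] with h' (hh : h' ∈ Ioi 0)
    rw [mem_Ioi] at hh
    simp only [mem_compl_iff, mem_singleton_iff]
    exact fun hc => (ne_of_gt (by linarith : t < t + h')) hc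

lemma hasDerivAt_right_tendsto_real {K : ℝ → ℝ} {d t : ℝ} (h : HasDerivAt K d t) :
    Tendsto (fun h' : ℝ => (K (t + h') - K t)/h') (𝓝[>] (0:ℝ)) (𝓝 d) := by
  have h1 := (hasDerivAt_iff_tendsto_slope.mp h).comp (tendsto_add_right_punctured t)
  apply Tendsto.congr' _ h1
  filter_upwards [self_mem_nhdsWithin] with h' (hh : h' ∈ Ioi 0)
  rw [mem_Ioi] at hh
  simp only [Function.comp_apply, slope_def_field]
  rw [add_sub_cancel_left]

lemma deriv_right_bound {K : ℝ → ℝ} {d t : ℝ} (h : HasDerivAt K d t) :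
    ∀ᶠ h' in 𝓝[>] (0:ℝ), K (t + h') - K t ≤ (d + 1) * h' := by
  filter_upwards [(hasDerivAt_right_tendsto_real h).eventually (eventually_lt_nhds (lt_add_one d)),
    self_mem_nhdsWithin] with h' h1 (hh : h' ∈ Ioi 0)
  rw [mem_Ioi] at hh
  rw [div_lt_iff₀ hh] at h1
  linarith

lemma hasDerivAt_right_quotient {Φ : ℝ → ℂ} {d : ℂ} {t : ℝ} (h : HasDerivAt Φ d t) :
    Tendsto (fun h' : ℝ => (Φ (t + h') - Φ t)/(h' : ℂ)) (𝓝[>] (0:ℝ)) (𝓝 d) := by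
  have h1 := (hasDerivAt_iff_tendsto_slope.mp h).comp (tendsto_add_right_punctured t)
  apply Tendsto.congr' _ h1
  filter_upwards [self_mem_nhdsWithin] with h' (hh : h' ∈ Ioi 0)
  rw [mem_Ioi] at hh
  simp only [Function.comp_apply, slope, vsub_eq_sub, add_sub_cancel_left, Complex.real_smul,
    Complex.ofReal_inv]
  rw [div_eq_inv_mul]

lemma primitive_clamp_mono {k : ℝ → ℝ} {T : ℝ} (hT : 0 ≤ T) (hk0 : ∀ x, 0 ≤ k x)
    (hki : IntegrableOn k (Icc 0 T)) :
    Monotone (fun x => ∫ ξ in (0:ℝ)..(max 0 (min x T)), k ξ) := by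
  intro a b hab
  have hmem : ∀ x : ℝ, max 0 (min x T) ∈ Icc 0 T := fun x =>
    ⟨le_max_left _ _, max_le hT (min_le_right _ _)⟩
  have hm : max 0 (min a T) ≤ max 0 (min b T) :=
    max_le_max le_rfl (min_le_min hab le_rfl)
  have i1 : IntervalIntegrable k volume 0 (max 0 (min a T)) :=
    (hki.mono_set (uIcc_subset_Icc (left_mem_Icc.mpr hT) (hmem a))).intervalIntegrable
  have i2 : IntervalIntegrable k volume (max 0 (min a T)) (max 0 (min b T)) :=
    (hki.mono_set (uIcc_subset_Icc (hmem a) (hmem b))).intervalIntegrable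
  have hadd := intervalIntegral.integral_add_adjacent_intervals i1 i2
  have hpos : 0 ≤ ∫ ξ in (max 0 (min a T))..(max 0 (min b T)), k ξ :=
    intervalIntegral.integral_nonneg hm (fun x _ => hk0 x)
  simp only
  linarith

lemma compact_subset_ball {K : Set ℂ} (hK : IsCompact K) (hKU : K ⊆ UD) :
    ∃ ρ : ℝ, 0 ≤ ρ ∧ ρ < 1 ∧ K ⊆ Metric.closedBall 0 ρ := by
  rcases K.eq_empty_or_nonempty with rfl | hne
  · exact ⟨0, le_rfl, one_pos, by simp⟩
  · obtain ⟨m, hmK, hmax⟩ := hK.exists_isMaxOn hne Complex.continuous_abs.continuousOn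
    refine ⟨Complex.abs m, Complex.abs.nonneg m, hKU hmK, ?_⟩
    intro x hx
    rw [Metric.mem_closedBall, Complex.dist_eq, sub_zero]
    exact hmax hx

set_option maxHeartbeats 2000000 in
/-- At a "good" time `t` (Lebesgue point of the base majorants, differentiability point of
the rational orbits), the difference quotients of the evolution family converge pointwise on
`𝔻`, uniformly on compacts. -/
lemma good_time (E : EvolutionFamilyUD) {t : ℝ} (ht : 0 < t)
    (S : Set ℂ)
    (hS : ∀ z ∈ UD, ∀ δ : ℝ, 0 < δ → ∃ w ∈ S ∩ UD, Complex.abs (z - w) < δ)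
    (k : ℂ → ℕ → ℝ → ℝ)
    (hk0 : ∀ z ∈ UD, ∀ n : ℕ, ∀ ξ, 0 ≤ k z n ξ)
    (hki : ∀ z ∈ UD, ∀ n : ℕ, IntegrableOn (k z n) (Icc 0 ((n:ℝ)+1)))
    (hkb : ∀ z ∈ UD, ∀ n : ℕ, ∀ s u v : ℝ, 0 ≤ s → s ≤ u → u ≤ v → v ≤ (n:ℝ)+1 →
        Complex.abs (E.φ s u z - E.φ s v z) ≤ ∫ ξ in u..v, k z n ξ)
    (hbase : ∀ n : ℕ, ∀ w ∈ ({0, 1/2} : Set ℂ), ∃ d : ℝ,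
        HasDerivAt (fun x => ∫ ξ in (0:ℝ)..(max 0 (min x ((n:ℝ)+1))), k w n ξ) d t)
    (horb : ∀ w ∈ S ∩ UD, ∀ q : ℚ, 0 ≤ (q:ℝ) → ∀ n : ℕ, t ∈ Ioo (q:ℝ) ((n:ℝ)+1) →
        ∃ d : ℂ, HasDerivAt (fun ξ => E.φ (q:ℝ) ξ w) d t) :
    (∀ z ∈ UD, ∃ c, Tendsto (fun h : ℝ => (E.φ t (t+h) z - z)/(h:ℂ)) (𝓝[>] (0:ℝ)) (𝓝 c)) ∧
    (∀ K : Set ℂ, K ⊆ UD → IsCompact K → ∀ Gf : ℂ → ℂ,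
      (∀ z ∈ K, Tendsto (fun h : ℝ => (E.φ t (t+h) z - z)/(h:ℂ)) (𝓝[>] (0:ℝ)) (𝓝 (Gf z))) →
      TendstoUniformlyOn (fun (h : ℝ) z => (E.φ t (t+h) z - z)/(h:ℂ)) Gf (𝓝[>] (0:ℝ)) K) := by
  classical
  set F : ℝ → ℂ → ℂ := fun h z => (E.φ t (t+h) z - z)/(h:ℂ) with hF_def
  set n : ℕ := ⌈t⌉₊ with hn_def
  have htn : t ≤ (n:ℝ) := Nat.le_ceil t
  have h0UD : (0:ℂ) ∈ UD := by simp [UD]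
  have hhalfUD : (1/2 : ℂ) ∈ UD := half_mem_UD
  obtain ⟨d0, hd0⟩ := hbase n 0 (by simp)
  obtain ⟨d1, hd1⟩ := hbase n (1/2) (by simp)
  set C : ℝ := |d0 + 1| + |d1 + 1| with hC_def
  have hC0 : (0:ℝ) ≤ C := by positivity
  have hIoo : Ioo (0:ℝ) 1 ∈ 𝓝[>] (0:ℝ) := Ioo_mem_nhdsGT_of_mem ⟨le_rfl, one_pos⟩
  -- difference of the clamped primitive over `[t, t+h]`
  have hKeq : ∀ w ∈ UD, ∀ h : ℝ, 0 ≤ h → t + h ≤ (n:ℝ)+1 →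
      (∫ ξ in (0:ℝ)..(max 0 (min (t+h) ((n:ℝ)+1))), k w n ξ)
        - (∫ ξ in (0:ℝ)..(max 0 (min t ((n:ℝ)+1))), k w n ξ) = ∫ ξ in t..(t+h), k w n ξ := by
    intro w hw h h0 hTn
    have e1 : max 0 (min (t+h) ((n:ℝ)+1)) = t + h := by
      rw [min_eq_left hTn, max_eq_right (by linarith)]
    have e2 : max 0 (min t ((n:ℝ)+1)) = t := by
      rw [min_eq_left (by linarith), max_eq_right ht.le]
    rw [e1, e2]
    have i1 : IntervalIntegrable (k w n) volume 0 t :=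
      ((hki w hw n).mono_set
        (uIcc_subset_Icc (left_mem_Icc.mpr (by linarith)) ⟨ht.le, by linarith⟩)).intervalIntegrable
    have i2 : IntervalIntegrable (k w n) volume t (t+h) :=
      ((hki w hw n).mono_set
        (uIcc_subset_Icc ⟨ht.le, by linarith⟩ ⟨by linarith, hTn⟩)).intervalIntegrable
    have := intervalIntegral.integral_add_adjacent_intervals i1 i2
    linarith
  -- pointwise bounds at the two base points
  have hpt0 : ∀ᶠ h in 𝓝[>] (0:ℝ), Complex.abs (E.φ t (t+h) 0 - 0) ≤ C * h ∧
      Complex.abs (E.φ t (t+h) (1/2) - 1/2) ≤ C * h := by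
    filter_upwards [deriv_right_bound hd0, deriv_right_bound hd1, hIoo] with h h1 h2 hh
    obtain ⟨hh0, hh1⟩ := hh
    have hTn : t + h ≤ (n:ℝ)+1 := by linarith
    have hb0 : ∀ w ∈ UD, E.φ t t w = w → Complex.abs (E.φ t (t+h) w - w) ≤
        (∫ ξ in (0:ℝ)..(max 0 (min (t+h) ((n:ℝ)+1))), k w n ξ)
          - (∫ ξ in (0:ℝ)..(max 0 (min t ((n:ℝ)+1))), k w n ξ) := by
      intro w hw hid
      rw [hKeq w hw h hh0.le hTn]
      have e := hkb w hw n t t (t+h) ht.le le_rfl (by linarith) hTn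
      rw [hid] at e
      rwa [Complex.abs.map_sub] at e
    constructor
    · have := hb0 0 h0UD (E.id_eq ht.le 0 h0UD)
      have hd0le : d0 + 1 ≤ C := by
        rw [hC_def]; nlinarith [le_abs_self (d0+1), abs_nonneg (d1+1)]
      calc Complex.abs (E.φ t (t+h) 0 - 0) ≤ _ := this
        _ ≤ (d0 + 1) * h := h1
        _ ≤ C * h := mul_le_mul_of_nonneg_right hd0le hh0.le
    · have := hb0 (1/2) hhalfUD (E.id_eq ht.le (1/2) hhalfUD)
      have hd1le : d1 + 1 ≤ C := by
        rw [hC_def]; nlinarith [le_abs_self (d1+1), abs_nonneg (d0+1)]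
      calc Complex.abs (E.φ t (t+h) (1/2) - 1/2) ≤ _ := this
        _ ≤ (d1 + 1) * h := h2
        _ ≤ C * h := mul_le_mul_of_nonneg_right hd1le hh0.le
  -- local boundedness of the difference quotients
  have hFb : ∀ ρ : ℝ, 0 ≤ ρ → ρ < 1 → ∀ᶠ h in 𝓝[>] (0:ℝ), ∀ z : ℂ, Complex.abs z ≤ ρ →
      Complex.abs (F h z) ≤ 300/(1-ρ^2)*C := by
    intro ρ hρ0 hρ1
    filter_upwards [hpt0, self_mem_nhdsWithin] with h hp (hh : h ∈ Ioi 0)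
    rw [mem_Ioi] at hh
    intro z hz
    have h2p := two_point (E.holo ht.le (by linarith : t ≤ t + h))
      (E.mapsTo ht.le (by linarith)) (mul_nonneg hC0 hh.le) hρ0 hρ1
      (by simpa using hp.1) hp.2 z hz
    rw [hF_def]
    simp only
    rw [map_div₀, Complex.abs_ofReal, _root_.abs_of_pos hh, div_le_iff₀ hh]
    calc Complex.abs (E.φ t (t+h) z - z) ≤ 300/(1-ρ^2)*(C*h) := h2p
      _ = 300/(1-ρ^2)*C*h := by ring
  have hFd : ∀ᶠ h in 𝓝[>] (0:ℝ), DifferentiableOn ℂ (F h) UD := by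
    filter_upwards [self_mem_nhdsWithin] with h (hh : h ∈ Ioi 0)
    rw [mem_Ioi] at hh
    exact ((E.holo ht.le (by linarith)).sub differentiableOn_id).div_const _
  -- equi-Lipschitz bounds on closed balls
  have hFlip : ∀ ρ : ℝ, 0 ≤ ρ → ρ < 1 → ∃ L : ℝ, 0 ≤ L ∧ ∀ᶠ h in 𝓝[>] (0:ℝ),
      ∀ w ∈ Metric.closedBall (0:ℂ) ρ, ∀ z ∈ Metric.closedBall (0:ℂ) ρ,
        Complex.abs (F h z - F h w) ≤ L * Complex.abs (z - w) := by
    intro ρ hρ0 hρ1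
    set R : ℝ := (1+ρ)/2 with hR_def
    have hR0 : 0 ≤ R := by rw [hR_def]; linarith
    have hR1 : R < 1 := by rw [hR_def]; linarith
    have hρR : ρ < R := by rw [hR_def]; linarith
    have hR2 : 0 < 1 - R^2 := by nlinarith
    set M : ℝ := 300/(1-R^2)*C with hM_def
    have hM0 : 0 ≤ M := by
      apply mul_nonneg _ hC0
      positivity
    refine ⟨(2*M+1)/(R-ρ), div_nonneg (by linarith) (by linarith), ?_⟩
    filter_upwards [hFb R hR0 hR1, hFd] with h hb hd
    intro w hw z hz
    have hsub : Metric.ball (0:ℂ) R ⊆ UD := by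
      rw [UD_eq]; exact Metric.ball_subset_ball hR1.le
    apply lip_of_bound (by linarith : (0:ℝ) < R) hM0 (hd.mono hsub) _ hρ0 hρR w hw z hz
    intro x hx
    apply hb
    rw [Metric.mem_ball, Complex.dist_eq, sub_zero] at hx
    exact hx.le
  -- convergence at image points of rational times and dense points
  have hgood : ∀ z' ∈ S ∩ UD, ∀ q : ℚ, 0 ≤ (q:ℝ) → (q:ℝ) < t →
      ∃ c, Tendsto (fun h => F h (E.φ (q:ℝ) t z')) (𝓝[>] (0:ℝ)) (𝓝 c) := by
    intro z' hz' q hq0 hqt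
    have hz'U : z' ∈ UD := hz'.2
    obtain ⟨d, hd⟩ := horb z' hz' q hq0 n ⟨hqt, by linarith⟩
    refine ⟨d, ?_⟩
    have h1 := hasDerivAt_right_quotient hd
    apply Tendsto.congr' _ h1
    filter_upwards [self_mem_nhdsWithin] with h (hh : h ∈ Ioi 0)
    rw [mem_Ioi] at hh
    rw [hF_def]
    simp only
    rw [E.comp hq0 hqt.le (by linarith : t ≤ t + h) z' hz'U]
  -- density of convergent points
  have hdense : ∀ z ∈ UD, ∀ δ : ℝ, 0 < δ → ∃ w ∈ UD, Complex.abs (z - w) < δ ∧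
      Complex.abs w ≤ Complex.abs z + δ ∧
      ∃ c, Tendsto (fun h => F h w) (𝓝[>] (0:ℝ)) (𝓝 c) := by
    intro z hz δ hδ
    obtain ⟨z', hz'S, hz'd⟩ := hS z hz (δ/2) (by positivity)
    have hz'U : z' ∈ UD := hz'S.2
    obtain ⟨q, hq0, hqt, hqint⟩ := tail_small (hk0 z' hz'U n) (hki z' hz'U n) ht
      (by linarith : t ≤ (n:ℝ)+1) (by positivity : (0:ℝ) < δ/2)
    set w := E.φ (q:ℝ) t z' with hw_def
    have hwU : w ∈ UD := E.mapsTo hq0 hqt.le hz'U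
    have hwz' : Complex.abs (z' - w) < δ/2 := by
      have e := hkb z' hz'U n q q t hq0 le_rfl hqt.le (by linarith)
      rw [E.id_eq hq0 z' hz'U] at e
      exact lt_of_le_of_lt e hqint
    have h3 : Complex.abs (z - w) < δ := by
      have := Complex.abs.sub_le z z' w
      linarith
    refine ⟨w, hwU, h3, ?_, hgood z' hz'S q hq0 hqt⟩
    have h4 : Complex.abs w - Complex.abs z ≤ Complex.abs (w - z) := by
      have := norm_sub_norm_le w z
      simpa [Complex.norm_eq_abs] using this
    rw [Complex.abs.map_sub] at h3
    linarith
  constructor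
  · -- pointwise convergence on UD
    intro z hz
    have hz1 : Complex.abs z < 1 := hz
    set ρ : ℝ := (1 + Complex.abs z)/2 with hρ_def
    have habs0 := Complex.abs.nonneg z
    have hρ0 : 0 ≤ ρ := by rw [hρ_def]; linarith
    have hρ1 : ρ < 1 := by rw [hρ_def]; linarith
    have hzρ : Complex.abs z < ρ := by rw [hρ_def]; linarith
    obtain ⟨L, hL0, hLlip⟩ := hFlip ρ hρ0 hρ1
    apply exists_lim_of_lip hL0 (K := Metric.closedBall (0:ℂ) ρ)
      (by rw [Metric.mem_closedBall, Complex.dist_eq, sub_zero]; exact hzρ.le) hLlip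
    intro δ hδ
    set δ' : ℝ := min δ ((ρ - Complex.abs z)/2) with hδ'_def
    have hδ'0 : 0 < δ' := by
      apply lt_min hδ
      linarith
    obtain ⟨w, hwU, hwz, hwρ, c, hc⟩ := hdense z hz δ' hδ'0
    refine ⟨w, ?_, lt_of_lt_of_le hwz (min_le_left _ _), ⟨c, hc⟩⟩
    rw [Metric.mem_closedBall, Complex.dist_eq, sub_zero, Complex.norm_eq_abs]
    have : δ' ≤ (ρ - Complex.abs z)/2 := min_le_right _ _
    linarith
  · -- uniform convergence on compacts
    intro K hKU hK Gf hGf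
    obtain ⟨ρ, hρ0, hρ1, hKρ⟩ := compact_subset_ball hK hKU
    obtain ⟨L, hL0, hLlip⟩ := hFlip ρ hρ0 hρ1
    apply tendstoUniformlyOn_of_lip hK hL0
    · filter_upwards [hLlip] with h hh
      intro w hw z hz
      exact hh w (hKρ hw) z (hKρ hz)
    · exact hGf

lemma ae_ne_real (a : ℝ) : ∀ᵐ x : ℝ, x ≠ a := by
  rw [ae_iff]
  have h : {x : ℝ | ¬ x ≠ a} = {a} := by ext x; simp
  rw [h]
  exact Real.volume_singleton

set_option maxHeartbeats 2000000 in
/-- [Almost-everywhere Berkson-Porta for evolution families]  For every evolution family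
in `𝔻` there is a Lebesgue-null set `N ⊂ [0,∞)` such that for `t ∉ N` and every `z ∈ 𝔻`
the limit `G(z,t) = lim_{h→0⁺}(φ_{t,t+h}(z) − z)/h` exists and defines a holomorphic map
in `z`; setting `G(·,t) = 0` for `t ∈ N`, `G` is an associated vector field:
`φ_{s,t}(z) = z + ∫_s^t G(φ_{s,ξ}(z), ξ) dξ`. -/
theorem evolutionFamilyUD_ae_vector_field (E : EvolutionFamilyUD) :
    ∃ N : Set ℝ, N ⊆ Set.Ici (0:ℝ) ∧ MeasureTheory.volume N = 0 ∧
    ∃ G : ℂ → ℝ → ℂ,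
      (∀ t : ℝ, 0 ≤ t → t ∉ N →
        (∀ z ∈ UD, Tendsto (fun h : ℝ => (E.φ t (t + h) z - z) / (h : ℂ))
          (𝓝[>] (0:ℝ)) (𝓝 (G z t))) ∧
        DifferentiableOn ℂ (fun z => G z t) UD) ∧
      (∀ t ∈ N, ∀ z : ℂ, G z t = 0) ∧
      (∀ ⦃s t : ℝ⦄, 0 ≤ s → s ≤ t → ∀ z ∈ UD,
        E.φ s t z = z + ∫ ξ in s..t, G (E.φ s ξ z) ξ) := by
  classical
  have h0UD : (0:ℂ) ∈ UD := by simp [UD]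
  -- choose the L¹ majorants
  have hkex : ∀ z ∈ UD, ∀ n : ℕ, ∃ kk : ℝ → ℝ, (∀ ξ, 0 ≤ kk ξ) ∧
      IntegrableOn kk (Icc 0 ((n:ℝ)+1)) ∧
      ∀ s u v : ℝ, 0 ≤ s → s ≤ u → u ≤ v → v ≤ (n:ℝ)+1 →
        Complex.abs (E.φ s u z - E.φ s v z) ≤ ∫ ξ in u..v, kk ξ := by
    intro z hz n
    obtain ⟨kk, h1, h2, h3⟩ := E.ac z hz ((n:ℝ)+1) (by positivity)
    exact ⟨kk, h1, h2, fun s u v a b c d => h3 a b c d⟩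
  choose! k hk0 hki hkb using hkex
  -- countable dense subset of the plane
  obtain ⟨S, hSc, hSd⟩ := TopologicalSpace.exists_countable_dense ℂ
  have hSdense : ∀ z ∈ UD, ∀ δ : ℝ, 0 < δ → ∃ w ∈ S ∩ UD, Complex.abs (z - w) < δ := by
    intro z hz δ hδ
    have hopen : IsOpen (Metric.ball z δ ∩ UD) := Metric.isOpen_ball.inter isOpen_UD
    have hne : (Metric.ball z δ ∩ UD).Nonempty := ⟨z, Metric.mem_ball_self hδ, hz⟩
    obtain ⟨w, hwS, hwm⟩ := hSd.exists_mem_open hopen hne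
    refine ⟨w, ⟨hwS, hwm.2⟩, ?_⟩
    have := hwm.1
    rw [Metric.mem_ball, Complex.dist_eq] at this
    rwa [Complex.norm_eq_abs, Complex.abs.map_sub] at this
  -- a.e. differentiability of the clamped primitives at the base points
  have hbase_ae : ∀ᵐ t : ℝ, ∀ n : ℕ, ∀ w ∈ ({0, 1/2} : Set ℂ), ∃ d : ℝ,
      HasDerivAt (fun x => ∫ ξ in (0:ℝ)..(max 0 (min x ((n:ℝ)+1))), k w n ξ) d t := by
    rw [ae_all_iff]
    intro n
    rw [ae_ball_iff ((Set.finite_singleton _).insert _).countable]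
    intro w hw
    have hwUD : w ∈ UD := by
      rcases hw with rfl | hw
      · exact h0UD
      · rw [mem_singleton_iff] at hw; subst hw; exact half_mem_UD
    have hmono := primitive_clamp_mono (by positivity : (0:ℝ) ≤ (n:ℝ)+1)
      (hk0 w hwUD n) (hki w hwUD n)
    filter_upwards [hmono.ae_differentiableAt] with t htd
    exact ⟨_, htd.hasDerivAt⟩
  -- a.e. differentiability of the rational orbits of the dense points
  have horb_ae : ∀ᵐ t : ℝ, ∀ w ∈ S ∩ UD, ∀ q : ℚ, ∀ n : ℕ, 0 ≤ (q:ℝ) →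
      t ∈ Ioo (q:ℝ) ((n:ℝ)+1) → ∃ d : ℂ, HasDerivAt (fun ξ => E.φ (q:ℝ) ξ w) d t := by
    rw [ae_ball_iff (hSc.mono inter_subset_left)]
    intro w hw
    rw [ae_all_iff]
    intro q
    rw [ae_all_iff]
    intro n
    have hwUD : w ∈ UD := hw.2
    by_cases hq : 0 ≤ (q:ℝ)
    · by_cases hqn : (q:ℝ) < (n:ℝ)+1
      · obtain ⟨g, hgD, _⟩ := ftc_complex (Φ := fun ξ => E.φ (q:ℝ) ξ w) (s := (q:ℝ))
          (T := (n:ℝ)+1) hqn.le (hk0 w hwUD n)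
          ((hki w hwUD n).mono_set (Icc_subset_Icc hq le_rfl))
          (by
            intro u v h1 h2 h3
            have := hkb w hwUD n q u v hq h1 h2 h3
            rwa [Complex.abs.map_sub] at this)
        filter_upwards [hgD] with t htD _ hmem
        exact ⟨g t, htD hmem⟩
      · filter_upwards with t
        intro _ hmem
        exact absurd (lt_trans hmem.1 hmem.2) hqn
    · filter_upwards with t
      intro hq' _
      exact absurd hq' hq
  -- assemble the null set
  obtain ⟨NA, hNA0, hNAg⟩ : ∃ NA : Set ℝ, volume NA = 0 ∧ ∀ t ∉ NA,
      ∀ n : ℕ, ∀ w ∈ ({0, 1/2} : Set ℂ), ∃ d : ℝ,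
        HasDerivAt (fun x => ∫ ξ in (0:ℝ)..(max 0 (min x ((n:ℝ)+1))), k w n ξ) d t := by
    exact ⟨_, ae_iff.mp hbase_ae, fun t ht => not_not.mp ht⟩
  obtain ⟨NB, hNB0, hNBg⟩ : ∃ NB : Set ℝ, volume NB = 0 ∧ ∀ t ∉ NB,
      ∀ w ∈ S ∩ UD, ∀ q : ℚ, ∀ n : ℕ, 0 ≤ (q:ℝ) →
        t ∈ Ioo (q:ℝ) ((n:ℝ)+1) → ∃ d : ℂ, HasDerivAt (fun ξ => E.φ (q:ℝ) ξ w) d t := by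
    exact ⟨_, ae_iff.mp horb_ae, fun t ht => not_not.mp ht⟩
  set N : Set ℝ := (insert (0:ℝ) (NA ∪ NB)) ∩ Ici 0 with hN_def
  have hN_sub : N ⊆ Ici (0:ℝ) := inter_subset_right
  have hzeroN : (0:ℝ) ∈ N := ⟨mem_insert _ _, Set.self_mem_Ici⟩
  have hN_null : volume N = 0 := by
    have hsub2 : N ⊆ {(0:ℝ)} ∪ (NA ∪ NB) := by
      intro x hx
      rcases hx.1 with h | h
      · exact Or.inl (by simpa using h)
      · exact Or.inr h
    refine le_antisymm ?_ (by simp)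
    calc volume N ≤ volume ({(0:ℝ)} ∪ (NA ∪ NB)) := measure_mono hsub2
      _ ≤ volume {(0:ℝ)} + volume (NA ∪ NB) := measure_union_le _ _
      _ ≤ volume {(0:ℝ)} + (volume NA + volume NB) :=
          add_le_add le_rfl (measure_union_le _ _)
      _ = 0 := by rw [hNA0, hNB0, Real.volume_singleton]; simp
  -- the conclusions of `good_time` at every good time
  have hgt : ∀ t : ℝ, 0 ≤ t → t ∉ N →
      (∀ z ∈ UD, ∃ c, Tendsto (fun h : ℝ => (E.φ t (t+h) z - z)/(h:ℂ)) (𝓝[>] (0:ℝ)) (𝓝 c)) ∧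
      (∀ K : Set ℂ, K ⊆ UD → IsCompact K → ∀ Gf : ℂ → ℂ,
        (∀ z ∈ K, Tendsto (fun h : ℝ => (E.φ t (t+h) z - z)/(h:ℂ)) (𝓝[>] (0:ℝ)) (𝓝 (Gf z))) →
        TendstoUniformlyOn (fun (h : ℝ) z => (E.φ t (t+h) z - z)/(h:ℂ)) Gf (𝓝[>] (0:ℝ)) K) := by
    intro t ht0 htN
    have htpos : 0 < t := by
      rcases eq_or_lt_of_le ht0 with rfl | h
      · exact absurd hzeroN htN
      · exact h
    have htA : t ∉ NA := fun h => htN ⟨mem_insert_of_mem _ (Or.inl h), ht0⟩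
    have htB : t ∉ NB := fun h => htN ⟨mem_insert_of_mem _ (Or.inr h), ht0⟩
    exact good_time E htpos S hSdense k hk0 hki hkb (fun n w hw => hNAg t htA n w hw)
      (fun w hw q hq n hmem => hNBg t htB w hw q n hq hmem)
  -- the vector field
  set G : ℂ → ℝ → ℂ := fun z τ => if h : 0 ≤ τ ∧ τ ∉ N ∧ z ∈ UD then
      limUnder (𝓝[>] (0:ℝ)) (fun h' : ℝ => (E.φ τ (τ + h') z - z)/(h' : ℂ)) else 0 with hG_def
  have htendG : ∀ t : ℝ, 0 ≤ t → t ∉ N → ∀ z ∈ UD,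
      Tendsto (fun h : ℝ => (E.φ t (t + h) z - z)/(h:ℂ)) (𝓝[>] (0:ℝ)) (𝓝 (G z t)) := by
    intro t ht0 htN z hz
    obtain ⟨c, hc⟩ := (hgt t ht0 htN).1 z hz
    have hGz : G z t = c := by
      simp only [hG_def]
      rw [dif_pos (⟨ht0, htN, hz⟩ : 0 ≤ t ∧ t ∉ N ∧ z ∈ UD)]
      exact hc.limUnder_eq
    rw [hGz]
    exact hc
  refine ⟨N, hN_sub, hN_null, G, ?_, ?_, ?_⟩
  · -- (1) limits and holomorphy
    intro t ht0 htN
    refine ⟨htendG t ht0 htN, ?_⟩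
    have htpos : 0 < t := by
      rcases eq_or_lt_of_le ht0 with rfl | h
      · exact absurd hzeroN htN
      · exact h
    have hTLU : TendstoLocallyUniformlyOn (fun (h : ℝ) z => (E.φ t (t+h) z - z)/(h:ℂ))
        (fun z => G z t) (𝓝[>] (0:ℝ)) UD := by
      rw [tendstoLocallyUniformlyOn_iff_forall_isCompact isOpen_UD]
      intro K hKU hK
      exact (hgt t ht0 htN).2 K hKU hK _ (fun z hz => htendG t ht0 htN z (hKU hz))
    apply hTLU.differentiableOn _ isOpen_UD
    filter_upwards [self_mem_nhdsWithin] with h (hh : h ∈ Ioi 0)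
    rw [mem_Ioi] at hh
    exact ((E.holo htpos.le (by linarith)).sub differentiableOn_id).div_const _
  · -- (2) zero on N
    intro t htN z
    simp only [hG_def]
    rw [dif_neg]
    rintro ⟨_, h2, _⟩
    exact h2 htN
  · -- (3) the integral identity
    intro s t hs0 hst z hz
    rcases eq_or_lt_of_le hst with rfl | hlt
    · rw [intervalIntegral.integral_same, E.id_eq hs0 z hz, add_zero]
    · set n : ℕ := ⌈t⌉₊ with hn_def
      have htn : t ≤ (n:ℝ) := Nat.le_ceil t
      obtain ⟨g, hgD, hgF⟩ := ftc_complex (Φ := fun ξ => E.φ s ξ z) (s := s) (T := t) hst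
        (hk0 z hz n) ((hki z hz n).mono_set (Icc_subset_Icc hs0 (by linarith)))
        (by
          intro u v h1 h2 h3
          have := hkb z hz n s u v hs0 h1 h2 (by linarith)
          rwa [Complex.abs.map_sub] at this)
      have he := hgF t (right_mem_Icc.mpr hst)
      rw [E.id_eq hs0 z hz] at he
      rw [he]
      congr 1
      apply intervalIntegral.integral_congr_ae
      have hNae : ∀ᵐ ξ : ℝ, ξ ∉ N := by
        rw [ae_iff]
        have : {ξ : ℝ | ¬ ξ ∉ N} = N := by ext x; simp
        rwa [this]
      filter_upwards [hgD, hNae, ae_ne_real t] with ξ hD hNξ htξ hmem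
      rw [Set.uIoc_of_le hst] at hmem
      have hmem' : ξ ∈ Ioo s t := ⟨hmem.1, lt_of_le_of_ne hmem.2 htξ⟩
      have hsξ : s ≤ ξ := hmem'.1.le
      have hξpos : 0 < ξ := lt_of_le_of_lt hs0 hmem'.1
      have hwU : E.φ s ξ z ∈ UD := E.mapsTo hs0 hsξ hz
      -- the right-hand difference quotient of the orbit converges to `g ξ`
      have h1 := hasDerivAt_right_quotient (hD hmem')
      have h2 : Tendsto (fun h : ℝ => (E.φ ξ (ξ+h) (E.φ s ξ z) - E.φ s ξ z)/(h:ℂ))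
          (𝓝[>] (0:ℝ)) (𝓝 (g ξ)) := by
        apply Tendsto.congr' _ h1
        filter_upwards [self_mem_nhdsWithin] with h (hh : h ∈ Ioi 0)
        rw [mem_Ioi] at hh
        show (E.φ s (ξ + h) z - E.φ s ξ z)/(h:ℂ)
            = (E.φ ξ (ξ + h) (E.φ s ξ z) - E.φ s ξ z)/(h:ℂ)
        rw [E.comp hs0 hsξ (by linarith : ξ ≤ ξ + h) z hz]
      have h3 := htendG ξ hξpos.le hNξ (E.φ s ξ z) hwU
      exact (tendsto_nhds_unique h2 h3).symm ▸ rfl
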